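/- For every integer n ≥ 2, the domination number of the undirected n-constrained de Bruijn graph on n symbols (whose vertices are the permutations of [n]) satisfies γ(cDB(n,n,n)) = ⌈n/3⌉ · (n−1)!. -/

import Mathlib

/-- A sequence `x` of length `n` over the alphabet `Fin d` is `t`-constrained if
equal symbols occur at positions at distance at least `t`. -/
def dbConstrained (d t n : ℕ) (x : Fin n → Fin d) : Prop :=
  ∀ i j : Fin n, i < j → x i = x j → t ≤ (j : ℕ) - (i : ℕ)

/-- The vertex set `V(d,t,n)` of the `t`-constrained de Bruijn graph: all
`t`-constrained sequences of length `n` over a `d`-letter alphabet. -/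
abbrev dbVtx (d t n : ℕ) : Type := {x : Fin n → Fin d // dbConstrained d t n x}

/-- `dbShift x y` holds when there is a directed de Bruijn edge from `x` to `y`,
i.e. `y` is obtained from `x` by deleting its first symbol and appending a new
last symbol. -/
def dbShift {d t n : ℕ} (x y : dbVtx d t n) : Prop :=
  ∀ (i : Fin n) (h : (i : ℕ) + 1 < n), y.val i = x.val ⟨(i : ℕ) + 1, h⟩

/-- `S` is a dominating set of the directed `t`-constrained de Bruijn graph
`cDB⁺(d,t,n)`: every vertex is dominated by (equal to, or an out-neighbor of)
some element of `S`. -/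
def dbDirDominating {d t n : ℕ} (S : Set (dbVtx d t n)) : Prop :=
  ∀ v : dbVtx d t n, ∃ s ∈ S, s = v ∨ dbShift s v

/-- The domination number `γ(cDB⁺(d,t,n))` of the directed `t`-constrained
de Bruijn graph. -/
noncomputable def gammaDir (d t n : ℕ) : ℕ :=
  sInf {k | ∃ S : Set (dbVtx d t n), S.Finite ∧ S.ncard = k ∧ dbDirDominating S}

/-- Adjacency in the undirected `t`-constrained de Bruijn graph `cDB(d,t,n)`:
edge directions are ignored and loops are removed. -/
def dbAdj {d t n : ℕ} (x y : dbVtx d t n) : Prop :=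
  x ≠ y ∧ (dbShift x y ∨ dbShift y x)

/-- `S` is a dominating set of the undirected graph `cDB(d,t,n)`: every vertex
is dominated by (equal to, or adjacent to) some element of `S`. -/
def dbUndirDominating {d t n : ℕ} (S : Set (dbVtx d t n)) : Prop :=
  ∀ v : dbVtx d t n, ∃ s ∈ S, s = v ∨ dbAdj s v

/-- The domination number `γ(cDB(d,t,n))` of the undirected `t`-constrained
de Bruijn graph. -/
noncomputable def gammaUndir (d t n : ℕ) : ℕ :=
  sInf {k | ∃ S : Set (dbVtx d t n), S.Finite ∧ S.ncard = k ∧ dbUndirDominating S}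


namespace GammaAux

variable {n : ℕ} [NeZero n]

open Fin.NatCast

lemma constrained_iff (x : Fin n → Fin n) :
    dbConstrained n n n x ↔ Function.Injective x := by
  constructor
  · intro h i j hxy
    by_contra hne
    rcases lt_or_gt_of_ne hne with hlt | hlt
    · have := h i j hlt hxy
      have := j.isLt
      omega
    · have := h j i hlt hxy.symm
      have := i.isLt
      omega
  · intro hinj i j hij hxy
    exact absurd (hinj hxy) (Fin.ne_of_lt hij)

lemma vinj (x : dbVtx n n n) : Function.Injective x.val :=
  (constrained_iff _).1 x.2

/-- rotation by one step -/
def rotV (x : dbVtx n n n) : dbVtx n n n :=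
  ⟨fun i => x.val (i + 1), by
    rw [constrained_iff]
    exact (vinj x).comp (add_left_injective 1)⟩

lemma rotV_val (x : dbVtx n n n) (i : Fin n) : (rotV x).val i = x.val (i + 1) := rfl

lemma val_add_one (hn : 2 ≤ n) (z : Fin n) : (z + 1).val = (z.val + 1) % n := by
  rw [Fin.val_add, Fin.val_one' n, Nat.mod_eq_of_lt (show 1 < n by omega)]

lemma dbShift_iff (hn : 2 ≤ n) (x y : dbVtx n n n) : dbShift x y ↔ y = rotV x := by
  constructor
  · intro h
    apply Subtype.ext; funext i
    by_cases hi : (i : ℕ) + 1 < n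
    · rw [h i hi, rotV_val]
      have harg : (⟨(i : ℕ) + 1, hi⟩ : Fin n) = i + 1 := by
        apply Fin.ext
        rw [val_add_one hn]
        exact (Nat.mod_eq_of_lt hi).symm
      rw [harg]
    · have hi' : (i : ℕ) = n - 1 := by have := i.isLt; omega
      have hbij : Function.Bijective x.val := Finite.injective_iff_bijective.1 (vinj x)
      obtain ⟨j, hj⟩ := hbij.2 (y.val i)
      have hj0 : (j : ℕ) = 0 := by
        by_contra hj0
        have hlt : (j : ℕ) - 1 + 1 < n := by have := j.isLt; omega
        have h2 := h ⟨(j : ℕ) - 1, by omega⟩ hlt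
        have hjj : (⟨(j : ℕ) - 1 + 1, hlt⟩ : Fin n) = j := Fin.ext (by simp; omega)
        rw [hjj, hj] at h2
        have := vinj y h2
        have := congrArg Fin.val this
        simp at this
        omega
      rw [rotV_val]
      have hi1 : i + 1 = 0 := by
        apply Fin.ext
        rw [val_add_one hn, Fin.val_zero, hi']
        have : n - 1 + 1 = n := by omega
        rw [this, Nat.mod_self]
      have hj' : j = 0 := Fin.ext (by simpa using hj0)
      rw [hi1, ← hj, hj']
  · rintro rfl i hi
    rw [rotV_val]
    have harg : (⟨(i : ℕ) + 1, hi⟩ : Fin n) = i + 1 := by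
      apply Fin.ext
      rw [val_add_one hn]
      exact (Nat.mod_eq_of_lt hi).symm
    rw [harg]

lemma dominating_iff (hn : 2 ≤ n) (S : Set (dbVtx n n n)) :
    dbUndirDominating S ↔ ∀ v, ∃ s ∈ S, v = s ∨ v = rotV s ∨ s = rotV v := by
  constructor
  · intro h v
    obtain ⟨s, hs, hc⟩ := h v
    refine ⟨s, hs, ?_⟩
    rcases hc with rfl | ⟨_, h1 | h2⟩
    · exact Or.inl rfl
    · exact Or.inr (Or.inl ((dbShift_iff hn s v).1 h1))
    · exact Or.inr (Or.inr ((dbShift_iff hn v s).1 h2))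
  · intro h v
    obtain ⟨s, hs, hc⟩ := h v
    refine ⟨s, hs, ?_⟩
    rcases hc with rfl | h1 | h2
    · exact Or.inl rfl
    · by_cases hsv : s = v
      · exact Or.inl hsv
      · exact Or.inr ⟨hsv, Or.inl ((dbShift_iff hn s v).2 h1)⟩
    · by_cases hsv : s = v
      · exact Or.inl hsv
      · exact Or.inr ⟨hsv, Or.inr ((dbShift_iff hn v s).2 h2)⟩

/-- position of the symbol `0` -/
noncomputable def zpos (x : dbVtx n n n) : Fin n :=
  (Equiv.ofBijective x.val (Finite.injective_iff_bijective.1 (vinj x))).symm 0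

lemma zpos_spec (x : dbVtx n n n) : x.val (zpos x) = 0 :=
  Equiv.ofBijective_apply_symm_apply _ _ _

lemma zpos_unique (x : dbVtx n n n) {i : Fin n} (h : x.val i = 0) : i = zpos x :=
  vinj x (by rw [h, zpos_spec])

abbrev Pfix (n : ℕ) [NeZero n] : Type :=
  {p : Fin n → Fin n // Function.Injective p ∧ p 0 = 0}

/-- inverse direction of the structural equivalence -/
def ofE (w : Fin n × Pfix n) : dbVtx n n n :=
  ⟨fun i => w.2.val (i - w.1), by
    rw [constrained_iff]
    exact w.2.2.1.comp (Equiv.subRight w.1).injective⟩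

lemma ofE_val (w : Fin n × Pfix n) (i : Fin n) : (ofE w).val i = w.2.val (i - w.1) := rfl

/-- forward direction of the structural equivalence -/
noncomputable def toE (x : dbVtx n n n) : Fin n × Pfix n :=
  (zpos x,
    ⟨fun i => x.val (i + zpos x),
      ⟨(vinj x).comp (add_left_injective _), by
        show x.val (0 + zpos x) = 0
        rw [zero_add, zpos_spec]⟩⟩)

lemma toE_fst (x : dbVtx n n n) : (toE x).1 = zpos x := rfl

lemma toE_snd (x : dbVtx n n n) (i : Fin n) : ((toE x).2 : Pfix n).val i = x.val (i + zpos x) := rfl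

/-- the structural equivalence: a vertex is determined by the position of `0`
and its canonical rotation representative. -/
noncomputable def E : dbVtx n n n ≃ Fin n × Pfix n where
  toFun := toE
  invFun := ofE
  left_inv x := Subtype.ext (funext fun i => by
    rw [ofE_val, toE_snd, toE_fst, sub_add_cancel])
  right_inv w := by
    obtain ⟨z, p⟩ := w
    have hx0 : (ofE (z, p)).val z = 0 := by rw [ofE_val]; simp [p.2.2]
    have hz : zpos (ofE (z, p)) = z := (zpos_unique _ hx0).symm
    refine Prod.ext ?_ (Subtype.ext (funext fun i => ?_))
    · rw [toE_fst, hz]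
    · show ((toE (ofE (z, p))).2 : Pfix n).val i = p.val i
      rw [toE_snd, hz, ofE_val, add_sub_cancel_right]

lemma E_fst (x : dbVtx n n n) : (E x).1 = zpos x := rfl

lemma E_snd_val (x : dbVtx n n n) (i : Fin n) :
    ((E x).2 : Pfix n).val i = x.val (i + zpos x) := rfl

lemma E_rotV (x : dbVtx n n n) : E (rotV x) = ((E x).1 - 1, (E x).2) := by
  have hz : zpos (rotV x) = zpos x - 1 := by
    symm
    apply zpos_unique
    rw [rotV_val, sub_add_cancel]
    exact zpos_spec x
  refine Prod.ext ?_ (Subtype.ext (funext fun i => ?_))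
  · rw [E_fst, E_fst, hz]
  · rw [E_snd_val, E_snd_val, rotV_val, hz]
    have harg : i + (zpos x - 1) + 1 = i + zpos x := by abel
    rw [harg]

noncomputable instance : Fintype (dbVtx n n n) := Fintype.ofFinite _
noncomputable instance : Fintype (Pfix n) := Fintype.ofFinite _

lemma card_V : Fintype.card (dbVtx n n n) = n.factorial := by
  have e : dbVtx n n n ≃ (Fin n ↪ Fin n) :=
    { toFun := fun x => ⟨x.val, vinj x⟩
      invFun := fun f => ⟨f, (constrained_iff _).2 f.injective⟩
      left_inv := fun x => Subtype.ext rfl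
      right_inv := fun f => rfl }
  rw [Fintype.card_congr e, Fintype.card_embedding_eq, Fintype.card_fin,
    Nat.descFactorial_self]

lemma card_P (hn : 2 ≤ n) : Fintype.card (Pfix n) = (n - 1).factorial := by
  have h1 : Fintype.card (Fin n × Pfix n) = n.factorial := by
    rw [← Fintype.card_congr (E (n := n)), card_V]
  rw [Fintype.card_prod, Fintype.card_fin] at h1
  have h2 := Nat.mul_factorial_pred (show n ≠ 0 by omega)
  exact Nat.eq_of_mul_eq_mul_left (show 0 < n by omega) (by rw [h1, h2])

/-- the dominating pattern inside one cycle -/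
noncomputable def covD (n : ℕ) [NeZero n] : Finset (Fin n) :=
  (Finset.range ((n + 2) / 3)).image (fun k => ((3 * k : ℕ) : Fin n))

lemma card_covD (hn : 2 ≤ n) : (covD n).card = (n + 2) / 3 := by
  rw [covD, Finset.card_image_of_injOn, Finset.card_range]
  intro a ha b hb hab
  simp only [Finset.coe_range, Set.mem_Iio] at ha hb
  have h3a : 3 * a < n := by omega
  have h3b : 3 * b < n := by omega
  have := congrArg Fin.val hab
  rw [Fin.val_cast_of_lt h3a, Fin.val_cast_of_lt h3b] at this
  omega

lemma covD_covers (hn : 2 ≤ n) (z : Fin n) :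
    ∃ zs ∈ covD n, z = zs ∨ z + 1 = zs ∨ zs + 1 = z := by
  have ha : (z : ℕ) < n := z.isLt
  by_cases hj : ((z : ℕ) + 1) / 3 < (n + 2) / 3
  · set j := ((z : ℕ) + 1) / 3 with hjdef
    refine ⟨((3 * j : ℕ) : Fin n), Finset.mem_image.2 ⟨j, Finset.mem_range.2 hj, rfl⟩, ?_⟩
    have h3j : 3 * j < n := by omega
    have hv : ((3 * j : ℕ) : Fin n).val = 3 * j := Fin.val_cast_of_lt h3j
    have hcase : (z : ℕ) + 1 = 3 * j ∨ (z : ℕ) = 3 * j ∨ (z : ℕ) = 3 * j + 1 := by omega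
    rcases hcase with hc | hc | hc
    · refine Or.inr (Or.inl (Fin.ext ?_))
      rw [val_add_one hn, hv, hc, Nat.mod_eq_of_lt (by omega)]
    · exact Or.inl (Fin.ext (by rw [hv, hc]))
    · refine Or.inr (Or.inr (Fin.ext ?_))
      rw [val_add_one hn, hv, Nat.mod_eq_of_lt (by omega), hc]
  · have hm1 : 0 < (n + 2) / 3 := by omega
    refine ⟨((3 * 0 : ℕ) : Fin n), Finset.mem_image.2 ⟨0, Finset.mem_range.2 hm1, rfl⟩, ?_⟩
    have han : (z : ℕ) + 1 = n := by omega
    refine Or.inr (Or.inl (Fin.ext ?_))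
    rw [val_add_one hn, han, Nat.mod_self]
    simp

lemma lower (hn : 2 ≤ n) (S : Set (dbVtx n n n)) (hdom : dbUndirDominating S) :
    (n + 2) / 3 * (n - 1).factorial ≤ S.ncard := by
  classical
  set m := (n + 2) / 3 with hmdef
  have hS : S.Finite := Set.toFinite S
  set F : Finset (Fin n × Pfix n) := hS.toFinset.image E with hFdef
  have hcard : F.card = S.ncard := by
    rw [hFdef, Finset.card_image_of_injective _ (Equiv.injective E),
      Set.ncard_eq_toFinset_card S hS]
  have key : ∀ p : Pfix n, m ≤ (F.filter (fun w => w.2 = p)).card := by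
    intro p
    set Fp := F.filter (fun w => w.2 = p) with hFp
    set A : Finset (Fin n) := Fp.image Prod.fst with hA
    have hcov : ∀ z : Fin n,
        z ∈ A ∪ A.image (fun a => a - 1) ∪ A.image (fun a => a + 1) := by
      intro z
      obtain ⟨s, hsS, hc⟩ := (dominating_iff hn S).1 hdom (E.symm (z, p))
      have hEv : E (E.symm (z, p)) = (z, p) := E.apply_symm_apply _
      have hsF : E s ∈ F := Finset.mem_image.2 ⟨s, hS.mem_toFinset.2 hsS, rfl⟩
      rcases hc with hc | hc | hc
      · have : E s = (z, p) := by rw [← hc]; exact hEv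
        have hFp' : E s ∈ Fp := Finset.mem_filter.2 ⟨hsF, by rw [this]⟩
        have : (E s).1 = z := by rw [this]
        exact Finset.mem_union.2 (Or.inl (Finset.mem_union.2 (Or.inl
          (Finset.mem_image.2 ⟨E s, hFp', this⟩))))
      · have h1 : ((E s).1 - 1, (E s).2) = (z, p) := by rw [← E_rotV, ← hc]; exact hEv
        have h2 : (E s).1 - 1 = z := congrArg Prod.fst h1
        have h3 : (E s).2 = p := congrArg Prod.snd h1
        have hFp' : E s ∈ Fp := Finset.mem_filter.2 ⟨hsF, h3⟩
        exact Finset.mem_union.2 (Or.inl (Finset.mem_union.2 (Or.inr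
          (Finset.mem_image.2 ⟨(E s).1, Finset.mem_image.2 ⟨E s, hFp', rfl⟩, h2⟩))))
      · have h1 : E s = (z - 1, p) := by
          rw [hc, E_rotV, hEv]
        have h2 : (E s).1 = z - 1 := by rw [h1]
        have h3 : (E s).2 = p := by rw [h1]
        have hFp' : E s ∈ Fp := Finset.mem_filter.2 ⟨hsF, h3⟩
        have hz : z = (E s).1 + 1 := by rw [h2, sub_add_cancel]
        exact Finset.mem_union.2 (Or.inr
          (Finset.mem_image.2 ⟨(E s).1, Finset.mem_image.2 ⟨E s, hFp', rfl⟩, hz.symm⟩))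
    have hsub : (Finset.univ : Finset (Fin n)) ⊆
        A ∪ A.image (fun a => a - 1) ∪ A.image (fun a => a + 1) :=
      fun z _ => hcov z
    have hn3 : n ≤ 3 * A.card := by
      have h1 := Finset.card_le_card hsub
      rw [Finset.card_univ, Fintype.card_fin] at h1
      have h2 := Finset.card_union_le (A ∪ A.image (fun a => a - 1)) (A.image (fun a => a + 1))
      have h3 := Finset.card_union_le A (A.image (fun a => a - 1))
      have h4 := Finset.card_image_le (s := A) (f := fun a => a - 1)
      have h5 := Finset.card_image_le (s := A) (f := fun a => a + 1)
      omega
    have hAcard : A.card ≤ Fp.card := Finset.card_image_le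
    omega
  have hsum : F.card = ∑ p : Pfix n, (F.filter (fun w => w.2 = p)).card :=
    Finset.card_eq_sum_card_fiberwise (fun w _ => Finset.mem_univ w.2)
  have hge : Fintype.card (Pfix n) * m ≤ F.card := by
    rw [hsum]
    calc Fintype.card (Pfix n) * m = ∑ _p : Pfix n, m := by
          rw [Finset.sum_const, Finset.card_univ, smul_eq_mul]
      _ ≤ ∑ p : Pfix n, (F.filter (fun w => w.2 = p)).card :=
          Finset.sum_le_sum (fun p _ => key p)
  rw [card_P hn] at hge
  rw [← hcard, mul_comm]
  exact hge

lemma upper (hn : 2 ≤ n) :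
    ∃ S : Set (dbVtx n n n), S.Finite ∧
      S.ncard = (n + 2) / 3 * (n - 1).factorial ∧ dbUndirDominating S := by
  classical
  set S0 : Finset (dbVtx n n n) :=
    (covD n ×ˢ (Finset.univ : Finset (Pfix n))).image E.symm with hS0
  refine ⟨↑S0, Set.toFinite _, ?_, ?_⟩
  · rw [Set.ncard_coe_finset, hS0, Finset.card_image_of_injective _ (Equiv.injective E.symm),
      Finset.card_product, card_covD hn, Finset.card_univ, card_P hn]
  · rw [dominating_iff hn]
    intro v
    obtain ⟨zs, hzs, hc⟩ := covD_covers hn (E v).1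
    set s : dbVtx n n n := E.symm (zs, (E v).2) with hs
    have hsS : s ∈ (↑S0 : Set (dbVtx n n n)) := by
      rw [Finset.mem_coe, hS0]
      exact Finset.mem_image.2 ⟨(zs, (E v).2),
        Finset.mem_product.2 ⟨hzs, Finset.mem_univ _⟩, rfl⟩
    have hEs : E s = (zs, (E v).2) := E.apply_symm_apply _
    refine ⟨s, hsS, ?_⟩
    rcases hc with hc | hc | hc
    · left
      apply E.injective
      rw [hEs, ← hc]
    · right; left
      apply E.injective
      rw [E_rotV, hEs]
      exact Prod.ext (by simp [← hc]) rfl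
    · right; right
      apply E.injective
      rw [E_rotV, hEs]
      exact Prod.ext (by simp [← hc]) rfl

end GammaAux

/-- `γ(cDB(n,n,n)) = ⌈n/3⌉ * (n-1)!`. -/
theorem gammaUndir_permutations (n : ℕ) (hn : 2 ≤ n) :
    gammaUndir n n n = ⌈(n : ℚ) / 3⌉₊ * (n - 1).factorial := by
  haveI : NeZero n := ⟨by omega⟩
  have hm : ⌈(n : ℚ) / 3⌉₊ = (n + 2) / 3 := by
    rw [Nat.ceil_eq_iff (by omega)]
    constructor
    · rw [lt_div_iff₀ (by norm_num : (0 : ℚ) < 3)]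
      exact_mod_cast (by omega : ((n + 2) / 3 - 1) * 3 < n)
    · rw [div_le_iff₀ (by norm_num : (0 : ℚ) < 3)]
      exact_mod_cast (by omega : n ≤ ((n + 2) / 3) * 3)
  rw [hm]
  obtain ⟨S, hfin, hcard, hdom⟩ := GammaAux.upper hn
  unfold gammaUndir
  apply le_antisymm
  · exact Nat.sInf_le ⟨S, hfin, hcard, hdom⟩
  · refine le_csInf ⟨_, S, hfin, hcard, hdom⟩ ?_
    rintro k ⟨T, hTfin, rfl, hTdom⟩
    exact GammaAux.lower hn T hTdom
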